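/- Let ℋ_A, ℋ_B be finite-dimensional complex Hilbert spaces with d_A ≥ 2 and d_B ≥ 2. There exists a quantum state ρ₀ on ℋ_A ⊗ ℋ_B such that for every ε ∈ (0,1) there is a quantum state ρ_ε on ℋ_A ⊗ ℋ_B with ‖ρ₀ − ρ_ε‖₁ = √ε, Ĥ_{ρ₀}(A|B) = log 2, and Ĥ_{ρ_ε}(A|B) = 0. Consequently, the BS-conditional entropy ρ ↦ Ĥ_ρ(A|B) is not continuous on the set of quantum states on ℋ_A ⊗ ℋ_B. -/

import Mathlib

open Matrix MeasureTheory
open scoped Kronecker Classical ComplexOrder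

noncomputable section

namespace QPaper

variable {n : Type*}

/-- A quantum state: positive semidefinite matrix with trace one. -/
def IsState [Fintype n] (ρ : Matrix n n ℂ) : Prop :=
  ρ.PosSemidef ∧ ρ.trace = 1

/-- The trace norm of a matrix: `tr √(XᴴX)`. -/
noncomputable def traceNorm [Fintype n] [DecidableEq n] (X : Matrix n n ℂ) : ℝ :=
  (((Matrix.posSemidef_conjTranspose_mul_self X).1.eigenvectorUnitary.1 *
      Matrix.diagonal (((↑) : ℝ → ℂ) ∘ (Real.sqrt ·) ∘ (Matrix.posSemidef_conjTranspose_mul_self X).1.eigenvalues) *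
      (star (Matrix.posSemidef_conjTranspose_mul_self X).1.eigenvectorUnitary : Matrix n n ℂ)).trace).re

/-- Functional calculus for Hermitian matrices: apply `f` to the eigenvalues. -/
noncomputable def matFun [Fintype n] [DecidableEq n] (f : ℝ → ℂ) (A : Matrix n n ℂ) :
    Matrix n n ℂ :=
  if hA : A.IsHermitian then
    (hA.eigenvectorUnitary : Matrix n n ℂ) *
      Matrix.diagonal (fun i => f (hA.eigenvalues i)) *
        (hA.eigenvectorUnitary : Matrix n n ℂ)ᴴ
  else 0

/-- Matrix logarithm on the support (0 ↦ 0). -/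
noncomputable def mlog [Fintype n] [DecidableEq n] (A : Matrix n n ℂ) : Matrix n n ℂ :=
  matFun (fun x => (Real.log x : ℂ)) A

/-- Real matrix powers on the support (Moore-Penrose style, 0 ↦ 0 for r ≠ 0). -/
noncomputable def mpow [Fintype n] [DecidableEq n] (A : Matrix n n ℂ) (r : ℝ) : Matrix n n ℂ :=
  matFun (fun x => ((x ^ r : ℝ) : ℂ)) A

/-- Complex matrix powers on the support (0 ↦ 0). -/
noncomputable def mcpow [Fintype n] [DecidableEq n] (A : Matrix n n ℂ) (z : ℂ) : Matrix n n ℂ :=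
  matFun (fun x => if x = 0 then 0 else (x : ℂ) ^ z) A

/-- The matrix `A log A`, functional calculus for `x ↦ x log x` (0 ↦ 0). -/
noncomputable def mXLogX [Fintype n] [DecidableEq n] (A : Matrix n n ℂ) : Matrix n n ℂ :=
  matFun (fun x => ((x * Real.log x : ℝ) : ℂ)) A

/-- Umegaki relative entropy `D(ρ‖K) = tr[ρ (log ρ - log K)]`. -/
noncomputable def relEnt [Fintype n] [DecidableEq n] (ρ K : Matrix n n ℂ) : ℝ :=
  ((ρ * (mlog ρ - mlog K)).trace).re

/-- Belavkin–Staszewski entropy `D̂(ρ‖K) = tr[ρ log(ρ^{1/2} K⁻¹ ρ^{1/2})]`. -/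
noncomputable def bsEnt [Fintype n] [DecidableEq n] (ρ K : Matrix n n ℂ) : ℝ :=
  ((ρ * mlog (mpow ρ (1/2) * mpow K (-1) * mpow ρ (1/2))).trace).re

/-- von Neumann entropy. -/
noncomputable def vnEnt [Fintype n] [DecidableEq n] (ρ : Matrix n n ℂ) : ℝ :=
  -(((ρ * mlog ρ).trace).re)

/-- Operator norm of a matrix. -/
noncomputable def opNorm [Fintype n] [DecidableEq n] (X : Matrix n n ℂ) : ℝ :=
  ‖Matrix.toEuclideanCLM (𝕜 := ℂ) X‖

/-- `ker K ⊆ ker ρ`. -/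
def kerLE [Fintype n] (K ρ : Matrix n n ℂ) : Prop :=
  ∀ v : n → ℂ, K.mulVec v = 0 → ρ.mulVec v = 0

/-- partial trace over the first factor. -/
noncomputable def ptrA {a b : Type*} [Fintype a] (ρ : Matrix (a × b) (a × b) ℂ) :
    Matrix b b ℂ :=
  Matrix.of fun i j => ∑ x : a, ρ (x, i) (x, j)

/-- partial trace over the second factor. -/
noncomputable def ptrB {a b : Type*} [Fintype b] (ρ : Matrix (a × b) (a × b) ℂ) :
    Matrix a a ℂ :=
  Matrix.of fun i j => ∑ x : b, ρ (i, x) (j, x)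

/-- partial trace over the middle factor of a tripartite system. -/
noncomputable def ptrMid {a b c : Type*} [Fintype b]
    (ρ : Matrix (a × b × c) (a × b × c) ℂ) : Matrix (a × c) (a × c) ℂ :=
  Matrix.of fun p q => ∑ y : b, ρ (p.1, y, p.2) (q.1, y, q.2)

/-- Conditional entropy `H_ρ(A|B) = S(ρ_{AB}) - S(ρ_B)`. -/
noncomputable def condEnt {a b : Type*} [Fintype a] [Fintype b] [DecidableEq a] [DecidableEq b]
    (ρ : Matrix (a × b) (a × b) ℂ) : ℝ :=
  vnEnt ρ - vnEnt (ptrA ρ)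

/-- Mutual information `I_ρ(A:B) = S(ρ_A) + S(ρ_B) - S(ρ_{AB})`. -/
noncomputable def mutInfo {a b : Type*} [Fintype a] [Fintype b] [DecidableEq a] [DecidableEq b]
    (ρ : Matrix (a × b) (a × b) ℂ) : ℝ :=
  vnEnt (ptrB ρ) + vnEnt (ptrA ρ) - vnEnt ρ

/-- Conditional mutual information `I_ρ(A:B|C)`. -/
noncomputable def condMutInfo {a b c : Type*} [Fintype a] [Fintype b] [Fintype c]
    [DecidableEq a] [DecidableEq b] [DecidableEq c]
    (ρ : Matrix (a × b × c) (a × b × c) ℂ) : ℝ :=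
  vnEnt (ptrMid ρ) + vnEnt (ptrA ρ) - vnEnt (ptrA (ptrA ρ)) - vnEnt ρ

/-- BS-conditional entropy `Ĥ_ρ(A|B) = -D̂(ρ ‖ 𝟙_A ⊗ ρ_B)`. -/
noncomputable def bsCondEnt {a b : Type*} [Fintype a] [Fintype b] [DecidableEq a] [DecidableEq b]
    (ρ : Matrix (a × b) (a × b) ℂ) : ℝ :=
  -(bsEnt ρ ((1 : Matrix a a ℂ) ⊗ₖ ptrA ρ))

/-- BS-mutual information `Î_ρ(A:B) = D̂(ρ ‖ ρ_A ⊗ ρ_B)`. -/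
noncomputable def bsMutInfo {a b : Type*} [Fintype a] [Fintype b] [DecidableEq a] [DecidableEq b]
    (ρ : Matrix (a × b) (a × b) ℂ) : ℝ :=
  bsEnt ρ (ptrB ρ ⊗ₖ ptrA ρ)

/-- BS-conditional mutual information `Î_ρ(A:B|C) = Ĥ_ρ(A|C) - Ĥ_ρ(A|BC)`. -/
noncomputable def bsCondMutInfo {a b c : Type*} [Fintype a] [Fintype b] [Fintype c]
    [DecidableEq a] [DecidableEq b] [DecidableEq c]
    (ρ : Matrix (a × b × c) (a × b × c) ℂ) : ℝ :=
  bsCondEnt (ptrMid ρ) - bsCondEnt (a := a) (b := b × c) ρ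

/-- Binary entropy. -/
noncomputable def binEnt (p : ℝ) : ℝ :=
  -(p * Real.log p) - (1 - p) * Real.log (1 - p)

/-- The function `f_{c₁,c₂}`. -/
noncomputable def fcc (c₁ c₂ p : ℝ) : ℝ :=
  p * Real.log (p + (1 - p) * c₁) + (1 - p) * Real.log ((1 - p) + p * c₂)

/-- The probability density `β₀`. -/
noncomputable def beta0 (t : ℝ) : ℝ :=
  (Real.pi / 2) * (Real.cosh (Real.pi * t) + 1)⁻¹



/-! ### Auxiliary machinery for the discontinuity theorem -/

section Helpers

variable {N : Type*} [Fintype N] [DecidableEq N]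

lemma smul_one_eq_diagonal' (μ : ℂ) : (μ • (1 : Matrix N N ℂ)) = diagonal (fun _ => μ) := by
  ext i j
  rcases eq_or_ne i j with h | h
  · subst h; simp
  · simp [Matrix.one_apply_ne h, Matrix.diagonal_apply_ne _ h, h]

lemma conj_mul_conj' {U X Y : Matrix N N ℂ} (hU1 : U * Uᴴ = 1) :
    (Uᴴ * X * U) * (Uᴴ * Y * U) = Uᴴ * (X * Y) * U := by
  calc (Uᴴ * X * U) * (Uᴴ * Y * U) = Uᴴ * (X * ((U * Uᴴ) * (Y * U))) := by
        simp only [Matrix.mul_assoc]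
    _ = Uᴴ * (X * (Y * U)) := by rw [hU1, Matrix.one_mul]
    _ = Uᴴ * (X * Y) * U := by simp only [Matrix.mul_assoc]

lemma conj_sub_smul {A : Matrix N N ℂ} (hA : A.IsHermitian) (μ : ℂ) :
    (hA.eigenvectorUnitary : Matrix N N ℂ)ᴴ * (A - μ • 1) * (hA.eigenvectorUnitary : Matrix N N ℂ)
      = diagonal (fun i => (hA.eigenvalues i : ℂ) - μ) := by
  have h2 : (hA.eigenvectorUnitary : Matrix N N ℂ)ᴴ * (hA.eigenvectorUnitary : Matrix N N ℂ) = 1 := by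
    rw [← Matrix.star_eq_conjTranspose]
    exact Matrix.mem_unitaryGroup_iff'.mp hA.eigenvectorUnitary.2
  rw [Matrix.mul_sub, Matrix.sub_mul, Matrix.mul_smul, Matrix.smul_mul, Matrix.mul_one, h2]
  have hd : star (hA.eigenvectorUnitary : Matrix N N ℂ) * A * (hA.eigenvectorUnitary : Matrix N N ℂ)
      = diagonal (RCLike.ofReal ∘ hA.eigenvalues) := by
    have := hA.conjStarAlgAut_star_eigenvectorUnitary
    simpa using this
  rw [← Matrix.star_eq_conjTranspose, hd]
  rw [smul_one_eq_diagonal', ← Matrix.diagonal_sub]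
  rfl

lemma eig_mem_quad {A : Matrix N N ℂ} (hA : A.IsHermitian) (μ ν : ℝ)
    (h : (A - (μ:ℂ) • 1) * (A - (ν:ℂ) • 1) = 0) (i : N) :
    hA.eigenvalues i = μ ∨ hA.eigenvalues i = ν := by
  have hU1 : (hA.eigenvectorUnitary : Matrix N N ℂ) * (hA.eigenvectorUnitary : Matrix N N ℂ)ᴴ = 1 := by
    rw [← Matrix.star_eq_conjTranspose]
    exact Matrix.mem_unitaryGroup_iff.mp hA.eigenvectorUnitary.2
  have key : diagonal (fun j => (hA.eigenvalues j : ℂ) - μ) * diagonal (fun j => (hA.eigenvalues j : ℂ) - ν) = 0 := by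
    rw [← conj_sub_smul hA (μ:ℂ), ← conj_sub_smul hA (ν:ℂ), conj_mul_conj' hU1, h]
    simp
  have := congrFun (congrFun key i) i
  simp only [Matrix.diagonal_mul_diagonal] at this
  have h0 : ((hA.eigenvalues i : ℂ) - μ) * ((hA.eigenvalues i : ℂ) - ν) = 0 := by
    simpa [Matrix.diagonal_apply_eq] using this
  rcases mul_eq_zero.mp h0 with h1 | h1
  · left; exact_mod_cast sub_eq_zero.mp h1
  · right; exact_mod_cast sub_eq_zero.mp h1

lemma eig_mem_cubic {A : Matrix N N ℂ} (hA : A.IsHermitian) (μ ν κ : ℝ)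
    (h : (A - (μ:ℂ) • 1) * (A - (ν:ℂ) • 1) * (A - (κ:ℂ) • 1) = 0) (i : N) :
    hA.eigenvalues i = μ ∨ hA.eigenvalues i = ν ∨ hA.eigenvalues i = κ := by
  have hU1 : (hA.eigenvectorUnitary : Matrix N N ℂ) * (hA.eigenvectorUnitary : Matrix N N ℂ)ᴴ = 1 := by
    rw [← Matrix.star_eq_conjTranspose]
    exact Matrix.mem_unitaryGroup_iff.mp hA.eigenvectorUnitary.2
  have key : diagonal (fun j => (hA.eigenvalues j : ℂ) - μ) * diagonal (fun j => (hA.eigenvalues j : ℂ) - ν)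
      * diagonal (fun j => (hA.eigenvalues j : ℂ) - κ) = 0 := by
    rw [← conj_sub_smul hA (μ:ℂ), ← conj_sub_smul hA (ν:ℂ), ← conj_sub_smul hA (κ:ℂ),
      conj_mul_conj' hU1, conj_mul_conj' hU1, h]
    simp
  have := congrFun (congrFun key i) i
  simp only [Matrix.diagonal_mul_diagonal] at this
  have h0 : ((hA.eigenvalues i : ℂ) - μ) * ((hA.eigenvalues i : ℂ) - ν) * ((hA.eigenvalues i : ℂ) - κ) = 0 := by
    simpa [Matrix.diagonal_apply_eq] using this
  rcases mul_eq_zero.mp h0 with h1 | h1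
  · rcases mul_eq_zero.mp h1 with h2 | h2
    · left; exact_mod_cast sub_eq_zero.mp h2
    · right; left; exact_mod_cast sub_eq_zero.mp h2
  · right; right; exact_mod_cast sub_eq_zero.mp h1

lemma matFun_eq_lin {A : Matrix N N ℂ} (hA : A.IsHermitian) {f : ℝ → ℂ} {a b : ℂ}
    (hf : ∀ i, f (hA.eigenvalues i) = a * (hA.eigenvalues i) + b * (hA.eigenvalues i)^2) :
    matFun f A = a • A + b • (A * A) := by
  have h2 : (hA.eigenvectorUnitary : Matrix N N ℂ)ᴴ * (hA.eigenvectorUnitary : Matrix N N ℂ) = 1 := by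
    rw [← Matrix.star_eq_conjTranspose]
    exact Matrix.mem_unitaryGroup_iff'.mp hA.eigenvectorUnitary.2
  set U := (hA.eigenvectorUnitary : Matrix N N ℂ) with hU
  set D := diagonal (RCLike.ofReal ∘ hA.eigenvalues : N → ℂ) with hD
  have hsp : A = U * D * Uᴴ := by
    exact hA.spectral_theorem
  have hAA : A * A = U * (D * D) * Uᴴ := by
    rw [hsp]
    calc U * D * Uᴴ * (U * D * Uᴴ) = U * (D * ((Uᴴ * U) * (D * Uᴴ))) := by
          simp only [Matrix.mul_assoc]
      _ = U * (D * (D * Uᴴ)) := by rw [h2, Matrix.one_mul]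
      _ = U * (D * D) * Uᴴ := by simp only [Matrix.mul_assoc]
  have hdiag : Matrix.diagonal (fun i => f (hA.eigenvalues i)) = a • D + b • (D * D) := by
    rw [hD, Matrix.diagonal_mul_diagonal]
    ext i j
    rcases eq_or_ne i j with h | h
    · subst h
      simp only [Matrix.diagonal_apply_eq, Matrix.add_apply, Matrix.smul_apply,
        Function.comp_apply, smul_eq_mul]
      rw [hf i]
      simp only [show (RCLike.ofReal : ℝ → ℂ) = Complex.ofReal from rfl]
      ring
    · simp [Matrix.diagonal_apply_ne _ h, h]
  rw [matFun, dif_pos hA, hdiag]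
  rw [Matrix.mul_add, Matrix.add_mul]
  congr 1
  · rw [Matrix.mul_smul, Matrix.smul_mul, ← hsp]
  · rw [Matrix.mul_smul, Matrix.smul_mul, ← hAA]

end Helpers

section Concrete

/-- weight-vector entries -/
def wv (t u : ℝ) (a b : ℕ) : ℝ :=
  if b = 0 then u else if b = 1 then (if a = 0 then t else -t) else 0

lemma wv_ge {t u : ℝ} {a b : ℕ} (hb : 2 ≤ b) : wv t u a b = 0 := by
  unfold wv; rw [if_neg (by omega), if_neg (by omega)]

/-- rank-≤2 "outer product" template matrix -/
def bigO (dA dB : ℕ) (t u t' u' : ℝ) : Matrix (Fin dA × Fin dB) (Fin dA × Fin dB) ℂ :=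
  Matrix.of fun p q => if p.1 = q.1 ∧ p.1.val < 2 then
    ((wv t u p.1.val p.2.val * wv t' u' q.1.val q.2.val : ℝ) : ℂ) else 0

lemma sum_fin_val {M : Type*} [AddCommMonoid M] {d : ℕ} (hd : 2 ≤ d) (F : ℕ → M)
    (hF : ∀ k, 2 ≤ k → F k = 0) : ∑ x : Fin d, F x.val = F 0 + F 1 := by
  rw [Fin.sum_univ_eq_sum_range]
  rw [← Finset.sum_range_add_sum_Ico _ hd]
  rw [Finset.sum_eq_zero (fun k hk => hF k (Finset.mem_Ico.mp hk).1), add_zero,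
    Finset.sum_range_succ, Finset.sum_range_one]

variable {dA dB : ℕ}

lemma bigO_apply_ne {t u t' u' : ℝ} {p q : Fin dA × Fin dB}
    (h : ¬(p.1 = q.1 ∧ p.1.val < 2)) : bigO dA dB t u t' u' p q = 0 := if_neg h

lemma bigO_mul_bigO (hdB : 2 ≤ dB) (t u t' u' s v s' v' : ℝ) :
    bigO dA dB t u t' u' * bigO dA dB s v s' v'
      = ((u' * v + t' * s : ℝ) : ℂ) • bigO dA dB t u s' v' := by
  ext p q
  rw [Matrix.mul_apply, Fintype.sum_prod_type]
  rw [Finset.sum_eq_single_of_mem p.1 (Finset.mem_univ _) (fun c _ hc => by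
    apply Finset.sum_eq_zero
    intro e _
    rw [bigO_apply_ne (fun h => hc h.1.symm), zero_mul])]
  by_cases hp2 : p.1.val < 2
  · by_cases hpq : p.1 = q.1
    · have hstep : ∀ e : Fin dB,
        bigO dA dB t u t' u' p (p.1, e) * bigO dA dB s v s' v' (p.1, e) q
          = (fun j => ((wv t u p.1.val p.2.val * wv t' u' p.1.val j : ℝ) : ℂ) *
              ((wv s v p.1.val j * wv s' v' q.1.val q.2.val : ℝ) : ℂ)) e.val := by
        intro e
        show (if _ ∧ _ then _ else _) * (if _ ∧ _ then _ else _) = _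
        rw [if_pos ⟨rfl, hp2⟩, if_pos ⟨hpq, hp2⟩]
      rw [Finset.sum_congr rfl (fun e _ => hstep e)]
      rw [sum_fin_val hdB (fun j => ((wv t u p.1.val p.2.val * wv t' u' p.1.val j : ℝ) : ℂ) *
              ((wv s v p.1.val j * wv s' v' q.1.val q.2.val : ℝ) : ℂ))
          (fun k hk => by simp only [wv_ge hk]; push_cast; ring)]
      show _ = _ * (if p.1 = q.1 ∧ p.1.val < 2 then
        ((wv t u p.1.val p.2.val * wv s' v' q.1.val q.2.val : ℝ) : ℂ) else 0)
      rw [if_pos ⟨hpq, hp2⟩]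
      unfold wv
      push_cast
      split_ifs <;> push_cast <;> ring
    · rw [Finset.sum_eq_zero (fun e _ => by
        rw [bigO_apply_ne (p := (p.1, e)) (q := q) (fun h => hpq h.1), mul_zero])]
      show (0:ℂ) = _ * (if _ ∧ _ then _ else _)
      rw [if_neg (fun h => hpq h.1), mul_zero]
  · rw [Finset.sum_eq_zero (fun e _ => by
      rw [bigO_apply_ne (p := p) (fun h => hp2 h.2), zero_mul])]
    show (0:ℂ) = _ * (if _ ∧ _ then _ else _)
    rw [if_neg (fun h => hp2 h.2), mul_zero]

lemma bigO_mul_diag (t u t' u' : ℝ) (g : Fin dA × Fin dB → ℂ) (G : ℕ → ℝ)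
    (hg : ∀ (a : Fin dA) (b : Fin dB), b.val < 2 → g (a, b) = (G b.val : ℂ)) :
    bigO dA dB t u t' u' * Matrix.diagonal g
      = bigO dA dB t u (t' * G 1) (u' * G 0) := by
  ext p q
  rw [Matrix.mul_diagonal]
  by_cases hc : p.1 = q.1 ∧ p.1.val < 2
  · show (if _ then _ else _) * _ = (if _ then _ else _)
    rw [if_pos hc, if_pos hc]
    by_cases hq : q.2.val < 2
    · rw [show g q = (G q.2.val : ℂ) from by rw [← hg q.1 q.2 hq]]
      push_cast
      unfold wv
      rcases (by omega : q.2.val = 0 ∨ q.2.val = 1) with h | h <;> rw [h] <;> norm_num <;>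
        split_ifs <;> push_cast <;> ring
    · rw [wv_ge (le_of_not_gt hq), wv_ge (le_of_not_gt hq)]
      push_cast; ring
  · show (if _ then _ else _) * _ = (if _ then _ else _)
    rw [if_neg hc, if_neg hc, zero_mul]

lemma trace_bigO (hdA : 2 ≤ dA) (hdB : 2 ≤ dB) (t u t' u' : ℝ) :
    (bigO dA dB t u t' u').trace = ((2 * (u * u' + t * t') : ℝ) : ℂ) := by
  unfold Matrix.trace
  rw [Fintype.sum_prod_type]
  have hrow : ∀ a : Fin dA, ∑ b : Fin dB, Matrix.diag (bigO dA dB t u t' u') (a, b)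
      = (fun k => if k < 2 then ((u * u' + t * t' : ℝ) : ℂ) else 0) a.val := by
    intro a
    by_cases ha : a.val < 2
    · simp only [if_pos ha]
      have hstep : ∀ b : Fin dB, Matrix.diag (bigO dA dB t u t' u') (a, b)
          = (fun j => ((wv t u a.val j * wv t' u' a.val j : ℝ) : ℂ)) b.val := by
        intro b
        show (if _ then _ else _) = _
        rw [if_pos ⟨rfl, ha⟩]
      rw [Finset.sum_congr rfl (fun b _ => hstep b)]
      rw [sum_fin_val hdB (fun j => ((wv t u a.val j * wv t' u' a.val j : ℝ) : ℂ))
        (fun k hk => by simp only [wv_ge hk]; push_cast; ring)]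
      unfold wv
      push_cast
      split_ifs <;> push_cast <;> ring
    · simp only [if_neg ha]
      apply Finset.sum_eq_zero
      intro b _
      exact bigO_apply_ne (fun h => ha h.2)
  rw [Finset.sum_congr rfl (fun a _ => hrow a)]
  rw [sum_fin_val hdA (fun k => if k < 2 then ((u * u' + t * t' : ℝ) : ℂ) else 0)
    (fun k hk => by simp only [if_neg (by omega : ¬ k < 2)])]
  norm_num
  push_cast; ring

lemma isHermitian_bigO (t u : ℝ) : (bigO dA dB t u t u).IsHermitian := by
  ext p q
  show (starRingEnd ℂ) ((if _ then _ else _)) = (if _ then _ else _)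
  by_cases hc : q.1 = p.1 ∧ q.1.val < 2
  · have hc' : p.1 = q.1 ∧ p.1.val < 2 := ⟨hc.1.symm, hc.1 ▸ hc.2⟩
    rw [if_pos hc, if_pos hc', Complex.conj_ofReal]
    rw [hc.1]
    push_cast; ring
  · have hc' : ¬(p.1 = q.1 ∧ p.1.val < 2) := fun h => hc ⟨h.1.symm, h.1 ▸ h.2⟩
    rw [if_neg hc, if_neg hc', map_zero]

lemma ptrA_bigO (hdA : 2 ≤ dA) (t u t' u' : ℝ) :
    ptrA (bigO dA dB t u t' u') = Matrix.diagonal (fun b : Fin dB =>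
      if b.val = 0 then ((2*(u*u') : ℝ):ℂ) else if b.val = 1 then ((2*(t*t') : ℝ):ℂ) else 0) := by
  ext i j
  show ∑ x : Fin dA, bigO dA dB t u t' u' (x, i) (x, j) = _
  have hstep : ∀ x : Fin dA, bigO dA dB t u t' u' (x, i) (x, j)
      = (fun k => if k < 2 then ((wv t u k i.val * wv t' u' k j.val : ℝ):ℂ) else 0) x.val := by
    intro x
    show (if _ then _ else _) = _
    by_cases hx : x.val < 2
    · rw [if_pos ⟨rfl, hx⟩]; simp only [if_pos hx]
    · rw [if_neg (fun hh => hx hh.2)]; simp only [if_neg hx]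
  rw [Finset.sum_congr rfl (fun x _ => hstep x)]
  rw [sum_fin_val hdA (fun k => if k < 2 then ((wv t u k i.val * wv t' u' k j.val : ℝ):ℂ) else 0)
    (fun k hk => by simp only [if_neg (by omega : ¬ k < 2)])]
  norm_num
  rcases eq_or_ne i j with h | h
  · subst h; rw [Matrix.diagonal_apply_eq]
    unfold wv
    split_ifs <;> first | (push_cast; ring1) | (exfalso; omega)
  · rw [Matrix.diagonal_apply_ne _ h]
    have hne : i.val ≠ j.val := fun hh => h (Fin.ext hh)
    unfold wv
    split_ifs <;> first | (exfalso; omega) | (push_cast; ring1) | contradiction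

lemma one_kron_diag (σ : Fin dB → ℂ) :
    (1 : Matrix (Fin dA) (Fin dA) ℂ) ⊗ₖ Matrix.diagonal σ
      = Matrix.diagonal (fun p : Fin dA × Fin dB => σ p.2) := by
  ext p q
  rw [Matrix.kroneckerMap_apply]
  rcases eq_or_ne p q with h | h
  · subst h; rw [Matrix.diagonal_apply_eq, Matrix.diagonal_apply_eq, Matrix.one_apply_eq, one_mul]
  · rw [Matrix.diagonal_apply_ne _ h]
    by_cases h1 : p.1 = q.1
    · have h2 : p.2 ≠ q.2 := fun hh => h (Prod.ext h1 hh)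
      rw [Matrix.diagonal_apply_ne _ h2, mul_zero]
    · rw [Matrix.one_apply_ne h1, zero_mul]

/-- indicator of the upper-left 2×2 block -/
def indD (dA dB : ℕ) : Matrix (Fin dA × Fin dB) (Fin dA × Fin dB) ℂ :=
  Matrix.diagonal (fun p : Fin dA × Fin dB =>
    (if p.1.val < 2 then (1:ℂ) else 0) * (if p.2.val < 2 then (1:ℂ) else 0))

/-- the squared-difference combination identity -/
lemma comb_eq (t u : ℝ) (htu : t^2 + u^2 = 1) :
    bigO dA dB 0 1 0 1 - (u:ℂ) • bigO dA dB 0 1 t u - (u:ℂ) • bigO dA dB t u 0 1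
      + bigO dA dB t u t u
    = ((t^2 : ℝ) : ℂ) • indD dA dB := by
  have htuC : (t:ℂ)^2 + (u:ℂ)^2 = 1 := by exact_mod_cast congrArg (Complex.ofReal) htu
  ext p q
  simp only [Matrix.add_apply, Matrix.sub_apply, Matrix.smul_apply, smul_eq_mul, indD]
  show (if _ then _ else _) - (u:ℂ) * (if _ then _ else _) - (u:ℂ) * (if _ then _ else _)
      + (if _ then _ else _) = ((t^2:ℝ):ℂ) * Matrix.diagonal _ p q
  by_cases hc : p.1 = q.1 ∧ p.1.val < 2
  · rw [if_pos hc, if_pos hc, if_pos hc, if_pos hc]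
    rcases eq_or_ne p q with h | h
    · subst h
      rw [Matrix.diagonal_apply_eq]
      unfold wv
      split_ifs <;> push_cast <;> first
        | (exfalso; omega)
        | ring1
        | linear_combination htuC
        | linear_combination (-1 : ℂ) * htuC
        | contradiction
    · rw [Matrix.diagonal_apply_ne _ h, mul_zero]
      have hne : p.2.val ≠ q.2.val := fun hh => h (Prod.ext hc.1 (Fin.ext hh))
      unfold wv
      split_ifs <;> push_cast <;> first | (exfalso; omega) | ring1 | contradiction
  · rw [if_neg hc, if_neg hc, if_neg hc, if_neg hc]
    rcases eq_or_ne p q with h2 | h2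
    · subst h2
      rw [Matrix.diagonal_apply_eq, if_neg (fun hh => hc ⟨rfl, hh⟩), zero_mul, mul_zero]; ring
    · rw [Matrix.diagonal_apply_ne _ h2, mul_zero]; ring

end Concrete

section States

variable {dA dB : ℕ}

/-- the family of states -/
def rhoM (dA dB : ℕ) (t u : ℝ) : Matrix (Fin dA × Fin dB) (Fin dA × Fin dB) ℂ :=
  (2⁻¹ : ℂ) • bigO dA dB t u t u

/-- diagonal of `𝟙 ⊗ ρ_B` -/
def dK (dA dB : ℕ) (t u : ℝ) : Fin dA × Fin dB → ℂ :=
  fun p => if p.2.val = 0 then ((u^2 : ℝ):ℂ) else if p.2.val = 1 then ((t^2 : ℝ):ℂ) else 0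

lemma isHermitian_rhoM (t u : ℝ) : (rhoM dA dB t u).IsHermitian := by
  unfold rhoM Matrix.IsHermitian
  rw [Matrix.conjTranspose_smul, isHermitian_bigO t u]
  congr 1
  simp [Complex.star_def, ← Complex.ofReal_ofNat]

lemma rhoM_sq (hdB : 2 ≤ dB) {t u : ℝ} (htu : t^2 + u^2 = 1) :
    rhoM dA dB t u * rhoM dA dB t u = (2⁻¹ : ℂ) • rhoM dA dB t u := by
  unfold rhoM
  rw [Matrix.smul_mul, Matrix.mul_smul, bigO_mul_bigO hdB]
  rw [show ((u * u + t * t : ℝ) : ℂ) = 1 from by push_cast; linear_combination (Complex.ofReal t^2 + Complex.ofReal u^2 - 1) + (by exact_mod_cast congrArg Complex.ofReal htu : (t:ℂ)^2+(u:ℂ)^2 = 1)]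
  rw [one_smul, smul_smul]

lemma trace_rhoM (hdA : 2 ≤ dA) (hdB : 2 ≤ dB) {t u : ℝ} (htu : t^2 + u^2 = 1) :
    (rhoM dA dB t u).trace = 1 := by
  unfold rhoM
  rw [Matrix.trace_smul, trace_bigO hdA hdB]
  have : ((2 * (u * u + t * t) : ℝ) : ℂ) = 2 := by
    have : u * u + t * t = 1 := by nlinarith
    rw [this]; norm_num
  rw [this]
  simp

lemma posSemidef_rhoM (hdB : 2 ≤ dB) {t u : ℝ} (htu : t^2 + u^2 = 1) :
    (rhoM dA dB t u).PosSemidef := by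
  have key : rhoM dA dB t u
      = (((Real.sqrt 2 : ℝ):ℂ) • rhoM dA dB t u)ᴴ * (((Real.sqrt 2 : ℝ):ℂ) • rhoM dA dB t u) := by
    rw [Matrix.conjTranspose_smul, (isHermitian_rhoM t u).eq]
    rw [Matrix.smul_mul, Matrix.mul_smul, rhoM_sq hdB htu, smul_smul, smul_smul]
    rw [Complex.star_def, Complex.conj_ofReal]
    rw [show ((Real.sqrt 2 : ℝ):ℂ) * ((Real.sqrt 2 : ℝ):ℂ) * (2⁻¹ : ℂ) = 1 from by
      rw [← Complex.ofReal_mul, Real.mul_self_sqrt (by norm_num)]; norm_num]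
    rw [one_smul]
  rw [key]
  exact Matrix.posSemidef_conjTranspose_mul_self _

lemma isState_rhoM (hdA : 2 ≤ dA) (hdB : 2 ≤ dB) {t u : ℝ} (htu : t^2 + u^2 = 1) :
    IsState (rhoM dA dB t u) :=
  ⟨posSemidef_rhoM hdB htu, trace_rhoM hdA hdB htu⟩

lemma ptrA_smul (c : ℂ) (M : Matrix (Fin dA × Fin dB) (Fin dA × Fin dB) ℂ) :
    ptrA (c • M) = c • ptrA M := by
  ext i j
  show ∑ x : Fin dA, (c • M) (x, i) (x, j) = c * ∑ x : Fin dA, M (x, i) (x, j)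
  rw [Finset.mul_sum]
  exact Finset.sum_congr rfl (fun x _ => rfl)

lemma kron_rhoM (hdA : 2 ≤ dA) (t u : ℝ) :
    (1 : Matrix (Fin dA) (Fin dA) ℂ) ⊗ₖ ptrA (rhoM dA dB t u)
      = Matrix.diagonal (dK dA dB t u) := by
  unfold rhoM
  rw [ptrA_smul, ptrA_bigO hdA]
  rw [show (2⁻¹ : ℂ) • Matrix.diagonal (fun b : Fin dB =>
      if b.val = 0 then ((2*(u*u) : ℝ):ℂ) else if b.val = 1 then ((2*(t*t) : ℝ):ℂ) else 0)
    = Matrix.diagonal (fun b : Fin dB =>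
      if b.val = 0 then ((u^2 : ℝ):ℂ) else if b.val = 1 then ((t^2 : ℝ):ℂ) else 0) from by
    rw [← Matrix.diagonal_smul]
    refine congrArg Matrix.diagonal (funext fun b => ?_)
    simp only [Pi.smul_apply, smul_eq_mul]
    split_ifs <;> push_cast <;> ring]
  rw [one_kron_diag]
  rfl

lemma quad_rhoM (hdB : 2 ≤ dB) {t u : ℝ} (htu : t^2 + u^2 = 1) :
    (rhoM dA dB t u - ((0:ℝ):ℂ) • 1) * (rhoM dA dB t u - ((1/2:ℝ):ℂ) • 1) = 0 := by
  rw [show ((0:ℝ):ℂ) = 0 from by norm_num, zero_smul, sub_zero]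
  rw [Matrix.mul_sub, Matrix.mul_smul, Matrix.mul_one, rhoM_sq hdB htu]
  rw [show ((1/2:ℝ):ℂ) = 2⁻¹ from by norm_num, sub_self]

lemma mpow_half_rhoM (hdB : 2 ≤ dB) {t u : ℝ} (htu : t^2 + u^2 = 1) :
    mpow (rhoM dA dB t u) (1/2) = ((Real.sqrt 2 : ℝ):ℂ) • rhoM dA dB t u := by
  have herm := isHermitian_rhoM (dA := dA) (dB := dB) t u
  have key := matFun_eq_lin herm (f := fun x => ((x ^ ((1:ℝ)/2) : ℝ) : ℂ))
    (a := ((Real.sqrt 2 : ℝ):ℂ)) (b := 0) (fun i => by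
      rcases eig_mem_quad herm 0 (1/2) (quad_rhoM hdB htu) i with h | h <;> simp only [h]
      · rw [Real.zero_rpow (by norm_num : (1:ℝ)/2 ≠ 0)]
        norm_num
      · rw [show ((1:ℝ)/2) ^ ((1:ℝ)/2) = Real.sqrt (1/2) from (Real.sqrt_eq_rpow _).symm]
        have h2 : Real.sqrt (1/2) = Real.sqrt 2 * (1/2) := by
          have hsq : ((Real.sqrt 2 * (1/2)) : ℝ) ^ 2 = 1/2 := by
            rw [mul_pow, Real.sq_sqrt (by norm_num : (0:ℝ) ≤ 2)]
            norm_num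
          calc Real.sqrt (1/2) = Real.sqrt ((Real.sqrt 2 * (1/2))^2) := by rw [hsq]
            _ = Real.sqrt 2 * (1/2) := Real.sqrt_sq (by positivity)
        rw [h2]
        push_cast; ring
      )
  unfold mpow
  rw [key, zero_smul, add_zero]

lemma isHermitian_diag_dK (t u : ℝ) : (Matrix.diagonal (dK dA dB t u)).IsHermitian := by
  rw [Matrix.isHermitian_diagonal_iff]
  intro p
  unfold dK
  split_ifs <;> first
    | exact IsSelfAdjoint.of_nonneg (by positivity)
    | exact isSelfAdjoint_zero _

/-- `mpow` of the diagonal `K` for `ρ₀` (t = 0, u = 1) -/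
lemma mpow_K0 : mpow (Matrix.diagonal (dK dA dB 0 1)) (-1) = Matrix.diagonal (dK dA dB 0 1) := by
  have herm := isHermitian_diag_dK (dA := dA) (dB := dB) 0 1
  have hsq : Matrix.diagonal (dK dA dB 0 1) * Matrix.diagonal (dK dA dB 0 1)
      = Matrix.diagonal (dK dA dB 0 1) := by
    rw [Matrix.diagonal_mul_diagonal]
    refine congrArg Matrix.diagonal (funext fun p => ?_)
    unfold dK
    split_ifs <;> norm_num
  have hquad : (Matrix.diagonal (dK dA dB 0 1) - ((0:ℝ):ℂ) • 1)
      * (Matrix.diagonal (dK dA dB 0 1) - ((1:ℝ):ℂ) • 1) = 0 := by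
    rw [show ((0:ℝ):ℂ) = 0 from by norm_num, zero_smul, sub_zero,
      show ((1:ℝ):ℂ) = 1 from by norm_num, one_smul, Matrix.mul_sub, Matrix.mul_one, hsq, sub_self]
  have key := matFun_eq_lin herm (f := fun x => ((x ^ (-1:ℝ) : ℝ) : ℂ)) (a := 1) (b := 0)
    (fun i => by
      rcases eig_mem_quad herm 0 1 hquad i with h | h <;> simp only [h]
      · rw [Real.zero_rpow (by norm_num : (-1:ℝ) ≠ 0)]
        push_cast; ring
      · rw [Real.one_rpow]
        push_cast; ring)
  unfold mpow
  rw [key, zero_smul, add_zero, one_smul]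

/-- `mpow` of the diagonal `K` for positive `t`, `u` -/
lemma mpow_Keps {t u : ℝ} (ht : t ≠ 0) (hu : u ≠ 0) (htu : t^2 + u^2 = 1) :
    mpow (Matrix.diagonal (dK dA dB t u)) (-1)
      = Matrix.diagonal (fun p : Fin dA × Fin dB =>
          if p.2.val = 0 then (((u^2)⁻¹ : ℝ):ℂ) else if p.2.val = 1 then (((t^2)⁻¹ : ℝ):ℂ) else 0) := by
  have herm := isHermitian_diag_dK (dA := dA) (dB := dB) t u
  set a : ℝ := (1 - t^2*u^2)/(t^2*u^2)^2 with ha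
  set b : ℝ := -(1/(t^2*u^2)^2) with hb
  have hw : u^2 = 1 - t^2 := by linarith
  have ht2 : t^2 ≠ 0 := pow_ne_zero 2 ht
  have h1t : (1:ℝ) - t^2 ≠ 0 := by rw [← hw]; exact pow_ne_zero 2 hu
  have idt : (t^2)⁻¹ = a * t^2 + b * (t^2)^2 := by
    rw [ha, hb, hw]
    field_simp
    ring
  have idu : (u^2)⁻¹ = a * u^2 + b * (u^2)^2 := by
    rw [ha, hb, hw]
    field_simp
    ring
  have hcubic : (Matrix.diagonal (dK dA dB t u) - ((0:ℝ):ℂ) • 1)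
      * (Matrix.diagonal (dK dA dB t u) - ((t^2:ℝ):ℂ) • 1)
      * (Matrix.diagonal (dK dA dB t u) - ((u^2:ℝ):ℂ) • 1) = 0 := by
    rw [show ((0:ℝ):ℂ) = 0 from by norm_num, zero_smul, sub_zero]
    rw [smul_one_eq_diagonal', smul_one_eq_diagonal', Matrix.diagonal_sub, Matrix.diagonal_sub,
      Matrix.diagonal_mul_diagonal, Matrix.diagonal_mul_diagonal]
    rw [show (0 : Matrix (Fin dA × Fin dB) (Fin dA × Fin dB) ℂ) = Matrix.diagonal (fun _ => 0) from
      (Matrix.diagonal_zero).symm]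
    refine congrArg Matrix.diagonal (funext fun p => ?_)
    try simp only [Pi.mul_apply, Pi.sub_apply]
    unfold dK
    split_ifs <;> push_cast <;> ring1
  have key := matFun_eq_lin herm (f := fun x => ((x ^ (-1:ℝ) : ℝ) : ℂ))
    (a := ((a:ℝ):ℂ)) (b := ((b:ℝ):ℂ)) (fun i => by
      have hrpow : ∀ x : ℝ, x ^ (-1:ℝ) = x⁻¹ := fun x => by
        rw [show (-1:ℝ) = ((-1:ℤ):ℝ) from by norm_num, Real.rpow_intCast, _root_.zpow_neg_one]
      rcases eig_mem_cubic herm 0 (t^2) (u^2) hcubic i with h | h | h <;>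
        simp only [h] <;> rw [hrpow]
      · push_cast; ring
      · rw [idt]; push_cast; ring
      · rw [idu]; push_cast; ring)
  unfold mpow
  rw [key]
  rw [Matrix.diagonal_mul_diagonal, ← Matrix.diagonal_smul, ← Matrix.diagonal_smul,
    Matrix.diagonal_add]
  refine congrArg Matrix.diagonal (funext fun p => ?_)
  simp only [Pi.add_apply, Pi.smul_apply, smul_eq_mul]
  unfold dK
  split_ifs
  · rw [idu]; push_cast; ring
  · rw [idt]; push_cast; ring
  · push_cast; ring

end States

section Main

variable {dA dB : ℕ}

lemma isHermitian_smul_real (c : ℝ) {M : Matrix (Fin dA × Fin dB) (Fin dA × Fin dB) ℂ}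
    (hM : M.IsHermitian) : ((c:ℂ) • M).IsHermitian := by
  unfold Matrix.IsHermitian
  rw [Matrix.conjTranspose_smul, hM.eq, Complex.star_def, Complex.conj_ofReal]

lemma mlog_M_eps (hdB : 2 ≤ dB) {t u : ℝ} (htu : t^2 + u^2 = 1) :
    mlog ((2:ℂ) • rhoM dA dB t u) = 0 := by
  have herm : ((2:ℂ) • rhoM dA dB t u).IsHermitian := by
    have := isHermitian_smul_real (dA := dA) (dB := dB) 2 (isHermitian_rhoM t u)
    simpa using this
  have hsq : ((2:ℂ) • rhoM dA dB t u) * ((2:ℂ) • rhoM dA dB t u) = (2:ℂ) • rhoM dA dB t u := by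
    rw [Matrix.smul_mul, Matrix.mul_smul, rhoM_sq hdB htu, smul_smul, smul_smul]
    norm_num
  have hquad : (((2:ℂ) • rhoM dA dB t u) - ((0:ℝ):ℂ) • 1)
      * (((2:ℂ) • rhoM dA dB t u) - ((1:ℝ):ℂ) • 1) = 0 := by
    rw [show ((0:ℝ):ℂ) = 0 from by norm_num, zero_smul, sub_zero,
      show ((1:ℝ):ℂ) = 1 from by norm_num, one_smul, Matrix.mul_sub, Matrix.mul_one, hsq, sub_self]
  have key := matFun_eq_lin herm (f := fun x => ((Real.log x : ℝ) : ℂ)) (a := 0) (b := 0)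
    (fun i => by
      rcases eig_mem_quad herm 0 1 hquad i with h | h <;> simp only [h]
      · rw [Real.log_zero]; norm_num
      · rw [Real.log_one]; norm_num)
  unfold mlog
  rw [key, zero_smul, zero_smul, add_zero]

lemma sandwich_eps (hdB : 2 ≤ dB) {t u : ℝ} (ht : t ≠ 0) (hu : u ≠ 0) :
    rhoM dA dB t u * Matrix.diagonal (fun p : Fin dA × Fin dB =>
          if p.2.val = 0 then (((u^2)⁻¹ : ℝ):ℂ) else if p.2.val = 1 then (((t^2)⁻¹ : ℝ):ℂ) else 0)
      * rhoM dA dB t u = rhoM dA dB t u := by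
  unfold rhoM
  rw [Matrix.smul_mul, Matrix.smul_mul, Matrix.mul_smul, smul_smul]
  rw [bigO_mul_diag t u t u _ (fun j => if j = 0 then (u^2)⁻¹ else (t^2)⁻¹)
    (fun a b hb => by
      rcases (by omega : b.val = 0 ∨ b.val = 1) with h | h <;>
        simp only [h] <;> norm_num)]
  rw [bigO_mul_bigO hdB]
  rw [show ((u * (if (0:ℕ) = 0 then (u^2)⁻¹ else (t^2)⁻¹) * u
      + t * (if (1:ℕ) = 0 then (u^2)⁻¹ else (t^2)⁻¹) * t : ℝ) : ℂ) = 2 from by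
    norm_num
    push_cast
    field_simp
    ring]
  rw [smul_smul]
  norm_num

lemma M_eps (hdA : 2 ≤ dA) (hdB : 2 ≤ dB) {t u : ℝ} (ht : 0 < t) (hu : 0 < u)
    (htu : t^2 + u^2 = 1) :
    mpow (rhoM dA dB t u) (1/2)
      * mpow ((1 : Matrix (Fin dA) (Fin dA) ℂ) ⊗ₖ ptrA (rhoM dA dB t u)) (-1)
      * mpow (rhoM dA dB t u) (1/2) = (2:ℂ) • rhoM dA dB t u := by
  rw [kron_rhoM hdA, mpow_half_rhoM hdB htu, mpow_Keps ht.ne' hu.ne' htu]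
  rw [Matrix.smul_mul, Matrix.smul_mul, Matrix.mul_smul, smul_smul]
  rw [sandwich_eps hdB ht.ne' hu.ne']
  congr 1
  rw [← Complex.ofReal_mul, Real.mul_self_sqrt (by norm_num)]
  norm_num

lemma bsCondEnt_rhoM_eps (hdA : 2 ≤ dA) (hdB : 2 ≤ dB) {t u : ℝ} (ht : 0 < t) (hu : 0 < u)
    (htu : t^2 + u^2 = 1) : bsCondEnt (rhoM dA dB t u) = 0 := by
  unfold bsCondEnt bsEnt
  rw [M_eps hdA hdB ht hu htu, mlog_M_eps hdB htu, Matrix.mul_zero, Matrix.trace_zero]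
  simp

lemma M_zero (hdA : 2 ≤ dA) (hdB : 2 ≤ dB) :
    mpow (rhoM dA dB 0 1) (1/2)
      * mpow ((1 : Matrix (Fin dA) (Fin dA) ℂ) ⊗ₖ ptrA (rhoM dA dB 0 1)) (-1)
      * mpow (rhoM dA dB 0 1) (1/2) = rhoM dA dB 0 1 := by
  have htu : (0:ℝ)^2 + (1:ℝ)^2 = 1 := by norm_num
  rw [kron_rhoM hdA, mpow_half_rhoM hdB htu, mpow_K0]
  rw [Matrix.smul_mul, Matrix.smul_mul, Matrix.mul_smul, smul_smul]
  have hsand : rhoM dA dB 0 1 * Matrix.diagonal (dK dA dB 0 1) * rhoM dA dB 0 1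
      = (2⁻¹:ℂ) • rhoM dA dB 0 1 := by
    unfold rhoM
    rw [Matrix.smul_mul, Matrix.smul_mul, Matrix.mul_smul, smul_smul]
    rw [bigO_mul_diag 0 1 0 1 _ (fun j => if j = 0 then 1 else 0)
      (fun a b hb => by
        rcases (by omega : b.val = 0 ∨ b.val = 1) with h | h <;>
          simp only [dK, h] <;> norm_num)]
    rw [bigO_mul_bigO hdB]
    rw [smul_smul]
    norm_num [smul_smul]
  rw [hsand, smul_smul]
  rw [show ((Real.sqrt 2 : ℝ):ℂ) * ((Real.sqrt 2 : ℝ):ℂ) * (2⁻¹:ℂ) = 1 from by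
    rw [← Complex.ofReal_mul, Real.mul_self_sqrt (by norm_num)]; norm_num]
  rw [one_smul]

lemma mlog_rho0 (hdB : 2 ≤ dB) :
    mlog (rhoM dA dB 0 1) = ((-2 * Real.log 2 : ℝ):ℂ) • rhoM dA dB 0 1 := by
  have htu : (0:ℝ)^2 + (1:ℝ)^2 = 1 := by norm_num
  have herm := isHermitian_rhoM (dA := dA) (dB := dB) 0 1
  have key := matFun_eq_lin herm (f := fun x => ((Real.log x : ℝ) : ℂ))
    (a := ((-2 * Real.log 2 : ℝ):ℂ)) (b := 0) (fun i => by
      rcases eig_mem_quad herm 0 (1/2) (quad_rhoM hdB htu) i with h | h <;> simp only [h]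
      · rw [Real.log_zero]; norm_num
      · rw [show Real.log (1/2) = - Real.log 2 from by
          rw [show (1/2 : ℝ) = 2⁻¹ from by norm_num, Real.log_inv]]
        push_cast; ring)
  unfold mlog
  rw [key, zero_smul, add_zero]

lemma bsCondEnt_rho0 (hdA : 2 ≤ dA) (hdB : 2 ≤ dB) :
    bsCondEnt (rhoM dA dB 0 1) = Real.log 2 := by
  have htu : (0:ℝ)^2 + (1:ℝ)^2 = 1 := by norm_num
  unfold bsCondEnt bsEnt
  rw [M_zero hdA hdB, mlog_rho0 hdB]
  rw [Matrix.mul_smul, Matrix.trace_smul, rhoM_sq hdB htu, Matrix.trace_smul,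
    trace_rhoM hdA hdB htu]
  rw [show ((-2 * Real.log 2 : ℝ):ℂ) • ((2⁻¹:ℂ) • (1:ℂ)) = ((- Real.log 2 : ℝ):ℂ) from by
    simp only [smul_eq_mul]; push_cast; ring]
  rw [Complex.ofReal_re]
  ring

lemma indD_mul_indD : indD dA dB * indD dA dB = indD dA dB := by
  unfold indD
  rw [Matrix.diagonal_mul_diagonal]
  refine congrArg Matrix.diagonal (funext fun p => ?_)
  split_ifs <;> ring

lemma trace_indD (hdA : 2 ≤ dA) (hdB : 2 ≤ dB) : (indD dA dB).trace = 4 := by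
  unfold indD
  rw [Matrix.trace_diagonal]
  rw [Fintype.sum_prod_type]
  have hrow : ∀ a : Fin dA,
      (∑ b : Fin dB, (if a.val < 2 then (1:ℂ) else 0) * (if b.val < 2 then (1:ℂ) else 0))
      = (fun k => if k < 2 then (2:ℂ) else 0) a.val := by
    intro a
    rw [← Finset.mul_sum]
    rw [sum_fin_val hdB (fun k => if k < 2 then (1:ℂ) else 0)
      (fun k hk => by simp only [if_neg (by omega : ¬ k < 2)])]
    norm_num
  rw [Finset.sum_congr rfl (fun a _ => hrow a)]
  rw [sum_fin_val hdA (fun k => if k < 2 then (2:ℂ) else 0)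
    (fun k hk => by simp only [if_neg (by omega : ¬ k < 2)])]
  norm_num

lemma traceNorm_diff (hdA : 2 ≤ dA) (hdB : 2 ≤ dB) {t u : ℝ} (ht : 0 ≤ t)
    (htu : t^2 + u^2 = 1) :
    traceNorm (rhoM dA dB 0 1 - rhoM dA dB t u) = 2 * t := by
  set X := rhoM dA dB 0 1 - rhoM dA dB t u with hX
  have hXh : Xᴴ = X := by
    rw [hX, Matrix.conjTranspose_sub, (isHermitian_rhoM 0 1).eq, (isHermitian_rhoM t u).eq]
  have hXX : Xᴴ * X = ((t^2/4 : ℝ):ℂ) • indD dA dB := by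
    rw [hXh, hX]
    have hXs : rhoM dA dB 0 1 - rhoM dA dB t u
        = (2⁻¹:ℂ) • (bigO dA dB 0 1 0 1 - bigO dA dB t u t u) := by
      unfold rhoM; rw [smul_sub]
    rw [hXs, Matrix.smul_mul, Matrix.mul_smul, smul_smul]
    have hexp : (bigO dA dB 0 1 0 1 - bigO dA dB t u t u)
        * (bigO dA dB 0 1 0 1 - bigO dA dB t u t u)
        = ((t^2 : ℝ) : ℂ) • indD dA dB := by
      rw [Matrix.sub_mul, Matrix.mul_sub, Matrix.mul_sub]
      rw [bigO_mul_bigO hdB 0 1 0 1 0 1 0 1, bigO_mul_bigO hdB 0 1 0 1 t u t u,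
        bigO_mul_bigO hdB t u t u 0 1 0 1, bigO_mul_bigO hdB t u t u t u t u]
      rw [show ((1 * 1 + 0 * 0 : ℝ) : ℂ) = 1 from by norm_num, one_smul]
      rw [show ((1 * u + 0 * t : ℝ) : ℂ) = (u:ℂ) from by push_cast; ring]
      rw [show ((u * 1 + t * 0 : ℝ) : ℂ) = (u:ℂ) from by push_cast; ring]
      rw [show ((u * u + t * t : ℝ) : ℂ) = 1 from by
        push_cast
        linear_combination (by exact_mod_cast congrArg Complex.ofReal htu : (t:ℂ)^2+(u:ℂ)^2 = 1)]
      rw [one_smul]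
      rw [← comb_eq t u htu]
      abel
    rw [hexp, smul_smul]
    congr 1
    push_cast; ring
  have hYpsd : (((t/2 : ℝ):ℂ) • indD dA dB).PosSemidef := by
    unfold indD
    rw [← Matrix.diagonal_smul]
    rw [Matrix.posSemidef_diagonal_iff]
    intro p
    simp only [Pi.smul_apply, smul_eq_mul]
    split_ifs
    · simpa using Complex.zero_le_real.mpr (by linarith : (0:ℝ) ≤ t/2)
    · simp
    · simp
    · simp
  have hYsq : (((t/2 : ℝ):ℂ) • indD dA dB) ^ 2 = Xᴴ * X := by
    rw [pow_two, Matrix.smul_mul, Matrix.mul_smul, smul_smul, indD_mul_indD, hXX]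
    congr 1
    push_cast; ring
  have herm := (Matrix.posSemidef_conjTranspose_mul_self X).1
  have hm : traceNorm X = ((matFun (fun x => ((Real.sqrt x : ℝ) : ℂ)) (Xᴴ * X)).trace).re := by
    unfold traceNorm matFun
    rw [dif_pos herm]
    rfl
  have hquad : (Xᴴ * X - ((0:ℝ):ℂ) • 1) * (Xᴴ * X - ((t^2/4:ℝ):ℂ) • 1) = 0 := by
    rw [hXX]
    simp [Matrix.mul_sub, Matrix.smul_mul, Matrix.mul_smul, indD_mul_indD]
  have key := matFun_eq_lin herm (f := fun x => ((Real.sqrt x : ℝ) : ℂ))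
    (a := ((2/t : ℝ):ℂ)) (b := 0) (fun i => by
      rcases eig_mem_quad herm 0 (t^2/4) hquad i with h | h <;> simp only [h]
      · simp
      · rcases eq_or_lt_of_le ht with h0 | h0
        · rw [← h0]; simp
        · rw [show t^2/4 = (t/2)^2 by ring, Real.sqrt_sq (by linarith)]
          push_cast; field_simp; ring)
  rw [hm, key, zero_smul, add_zero, hXX, smul_smul, Matrix.trace_smul, trace_indD hdA hdB]
  rcases eq_or_lt_of_le ht with h0 | h0
  · rw [← h0]; simp
  · simp only [smul_eq_mul]
    rw [show ((2/t:ℝ):ℂ) * ((t^2/4:ℝ):ℂ) * 4 = ((2*t:ℝ):ℂ) by push_cast; field_simp]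
    exact Complex.ofReal_re _

end Main

section Continuity

variable {dA dB : ℕ}

lemma continuous_wv_entry (a b : ℕ) :
    Continuous (fun ε : ℝ => wv (Real.sqrt (ε/4)) (Real.sqrt (1 - ε/4)) a b) := by
  unfold wv
  split_ifs <;> fun_prop

lemma continuous_Phi :
    Continuous (fun ε : ℝ => rhoM dA dB (Real.sqrt (ε/4)) (Real.sqrt (1 - ε/4))) := by
  apply continuous_matrix
  intro p q
  unfold rhoM bigO
  simp only [Matrix.smul_apply, Matrix.of_apply, smul_eq_mul]
  apply Continuous.mul continuous_const
  by_cases hc : p.1 = q.1 ∧ p.1.val < 2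
  · simp only [if_pos hc]
    apply Complex.continuous_ofReal.comp
    exact ((continuous_wv_entry p.1.val p.2.val).mul (continuous_wv_entry q.1.val q.2.val))
  · simp only [if_neg hc]
    exact continuous_const

lemma Phi_zero :
    rhoM dA dB (Real.sqrt (0/4)) (Real.sqrt (1 - 0/4)) = rhoM dA dB 0 1 := by
  norm_num

end Continuity

/-- **Discontinuity of the BS-conditional entropy**. -/
theorem bsCondEnt_discontinuous {dA dB : ℕ} (hA : 2 ≤ dA) (hB : 2 ≤ dB) :
    (∃ ρ₀ : Matrix (Fin dA × Fin dB) (Fin dA × Fin dB) ℂ, IsState ρ₀ ∧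
      bsCondEnt ρ₀ = Real.log 2 ∧
      ∀ ε : ℝ, 0 < ε → ε < 1 →
        ∃ ρε : Matrix (Fin dA × Fin dB) (Fin dA × Fin dB) ℂ, IsState ρε ∧
          traceNorm (ρ₀ - ρε) = Real.sqrt ε ∧ bsCondEnt ρε = 0) ∧
    ¬ ContinuousOn (bsCondEnt (a := Fin dA) (b := Fin dB))
        {ρ : Matrix (Fin dA × Fin dB) (Fin dA × Fin dB) ℂ | IsState ρ} := by
  have htu0 : (0:ℝ)^2 + (1:ℝ)^2 = 1 := by norm_num
  -- facts about the ε-family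
  have hfam : ∀ ε : ℝ, 0 < ε → ε < 1 →
      IsState (rhoM dA dB (Real.sqrt (ε/4)) (Real.sqrt (1 - ε/4)))
      ∧ traceNorm (rhoM dA dB 0 1 - rhoM dA dB (Real.sqrt (ε/4)) (Real.sqrt (1 - ε/4)))
          = Real.sqrt ε
      ∧ bsCondEnt (rhoM dA dB (Real.sqrt (ε/4)) (Real.sqrt (1 - ε/4))) = 0 := by
    intro ε hε0 hε1
    set t := Real.sqrt (ε/4) with hts
    set u := Real.sqrt (1 - ε/4) with hus
    have ht2 : t^2 = ε/4 := Real.sq_sqrt (by linarith)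
    have hu2 : u^2 = 1 - ε/4 := Real.sq_sqrt (by linarith)
    have htu : t^2 + u^2 = 1 := by rw [ht2, hu2]; ring
    have ht : 0 < t := Real.sqrt_pos.mpr (by linarith)
    have hu : 0 < u := Real.sqrt_pos.mpr (by linarith)
    refine ⟨isState_rhoM hA hB htu, ?_, bsCondEnt_rhoM_eps hA hB ht hu htu⟩
    rw [traceNorm_diff hA hB ht.le htu]
    rw [hts, show (2:ℝ) = Real.sqrt 4 from by
        rw [show (4:ℝ) = 2^2 from by norm_num, Real.sqrt_sq (by norm_num)]]
    rw [← Real.sqrt_mul (by norm_num : (0:ℝ) ≤ 4)]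
    rw [show 4 * (ε/4) = ε from by ring]
  constructor
  · refine ⟨rhoM dA dB 0 1, isState_rhoM hA hB htu0, bsCondEnt_rho0 hA hB, ?_⟩
    intro ε hε0 hε1
    exact ⟨rhoM dA dB (Real.sqrt (ε/4)) (Real.sqrt (1 - ε/4)),
      (hfam ε hε0 hε1).1, (hfam ε hε0 hε1).2.1, (hfam ε hε0 hε1).2.2⟩
  · intro hcont
    set S := {ρ : Matrix (Fin dA × Fin dB) (Fin dA × Fin dB) ℂ | IsState ρ} with hS
    have hρ₀S : rhoM dA dB 0 1 ∈ S := isState_rhoM hA hB htu0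
    have h1 : ContinuousWithinAt (bsCondEnt (a := Fin dA) (b := Fin dB)) S (rhoM dA dB 0 1) :=
      hcont _ hρ₀S
    -- the sequence of ε's
    set e : ℕ → ℝ := fun k => ((k:ℝ) + 2)⁻¹ with he
    have he0 : ∀ k, 0 < e k := fun k => by positivity
    have he1 : ∀ k, e k < 1 := fun k => by
      rw [he]
      apply inv_lt_one_of_one_lt₀
      have : (0:ℝ) ≤ (k:ℝ) := Nat.cast_nonneg k
      linarith
    have hetend : Filter.Tendsto e Filter.atTop (nhds 0) := by
      apply tendsto_inv_atTop_zero.comp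
      exact Filter.tendsto_atTop_add_const_right _ 2 tendsto_natCast_atTop_atTop
    set x : ℕ → Matrix (Fin dA × Fin dB) (Fin dA × Fin dB) ℂ :=
      fun k => rhoM dA dB (Real.sqrt (e k / 4)) (Real.sqrt (1 - e k / 4)) with hx
    have hxtend : Filter.Tendsto x Filter.atTop (nhds (rhoM dA dB 0 1)) := by
      have := (continuous_Phi (dA := dA) (dB := dB)).continuousAt (x := (0:ℝ))
      have h2 := this.tendsto.comp hetend
      rw [Phi_zero] at h2
      exact h2
    have hxS : ∀ k, x k ∈ S := fun k => (hfam (e k) (he0 k) (he1 k)).1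
    have hxval : ∀ k, bsCondEnt (x k) = 0 := fun k => (hfam (e k) (he0 k) (he1 k)).2.2
    have h2 : Filter.Tendsto (fun k => bsCondEnt (x k)) Filter.atTop
        (nhds (bsCondEnt (rhoM dA dB 0 1))) := by
      apply h1.tendsto.comp
      rw [tendsto_nhdsWithin_iff]
      exact ⟨hxtend, Filter.Eventually.of_forall hxS⟩
    rw [bsCondEnt_rho0 hA hB] at h2
    rw [show (fun k => bsCondEnt (x k)) = (fun _ : ℕ => (0:ℝ)) from funext hxval] at h2
    have := tendsto_nhds_unique h2 tendsto_const_nhds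
    have hlog : Real.log 2 ≠ 0 := ne_of_gt (Real.log_pos (by norm_num))
    exact hlog this

end QPaper
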